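/- arXiv:1311.7589 — 2 statements merged into one kernel-verified Lean document; each statement's English description precedes it below -/
import Mathlib

section
/- Let x_1, x_2, ... be a sequence of nonnegative reals each at most εU, and let y_1, ..., y_m be nonnegative reals with ∑_{j} x_j ≥ ∑_i y_i. Define i(0) = 0 and, for k = 1, ..., m, let i(k) be the minimum index such that ∑_{j=1}^{i(k)} x_j ≥ ∑_{i=1}^{k} y_i. Then for each k, the sum ∑_{j=i(k-1)+1}^{i(k)} x_j lies in the interval [y_k - εU, y_k + εU]. -/
theorem stmt_4 (ε U : ℝ) (hε : 0 < ε) (hU : 0 < U) (n m : ℕ)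
    (x y : ℕ → ℝ) (hx0 : ∀ j, 0 ≤ x j) (hx1 : ∀ j, x j ≤ ε * U) (hy : ∀ i, 0 ≤ y i)
    (hsum : ∑ i ∈ Finset.range m, y i ≤ ∑ j ∈ Finset.range n, x j)
    (I : ℕ → ℕ) (hI0 : I 0 = 0)
    (hIge : ∀ k, 1 ≤ k → k ≤ m →
      ∑ i ∈ Finset.range k, y i ≤ ∑ j ∈ Finset.range (I k), x j)
    (hImin : ∀ k, 1 ≤ k → k ≤ m → ∀ t, t < I k →
      ∑ j ∈ Finset.range t, x j < ∑ i ∈ Finset.range k, y i) :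
    ∀ k, 1 ≤ k → k ≤ m →
      y (k - 1) - ε * U ≤ ∑ j ∈ Finset.Ico (I (k - 1)) (I k), x j ∧
      ∑ j ∈ Finset.Ico (I (k - 1)) (I k), x j ≤ y (k - 1) + ε * U := by
  have hεU : 0 < ε * U := mul_pos hε hU
  set S : ℕ → ℝ := fun t => ∑ j ∈ Finset.range t, x j with hS
  set Y : ℕ → ℝ := fun k => ∑ i ∈ Finset.range k, y i with hY
  -- upper bound lemma
  have key : ∀ k, 1 ≤ k → k ≤ m → S (I k) ≤ Y k + ε * U := by
    intro k hk1 hkm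
    rcases Nat.eq_zero_or_pos (I k) with h0 | hpos
    · have hYk : 0 ≤ Y k := Finset.sum_nonneg fun i _ => hy i
      simp only [hS, h0, Finset.range_zero, Finset.sum_empty]
      linarith
    · obtain ⟨t, ht⟩ : ∃ t, I k = t + 1 := ⟨I k - 1, (Nat.succ_pred_eq_of_pos hpos).symm⟩
      have hlt : S t < Y k := hImin k hk1 hkm t (by omega)
      have : S (I k) = S t + x t := by
        simp [hS, ht, Finset.sum_range_succ]
      rw [this]
      have := hx1 t
      linarith
  have lowkey : ∀ k, k ≤ m → Y k ≤ S (I k) ∧ S (I k) ≤ Y k + ε * U := by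
    intro k hkm
    rcases Nat.eq_zero_or_pos k with h0 | hk1
    · subst h0
      simp only [hS, hY, hI0, Finset.range_zero, Finset.sum_empty]
      constructor <;> linarith
    · exact ⟨hIge k hk1 hkm, key k hk1 hkm⟩
  intro k hk1 hkm
  have hk1m : k - 1 ≤ m := by omega
  obtain ⟨hA, hB⟩ := lowkey (k - 1) hk1m
  obtain ⟨hC, hD⟩ := lowkey k hkm
  have hmono : I (k - 1) ≤ I k := by
    by_contra h
    push_neg at h
    rcases Nat.eq_zero_or_pos (k - 1) with h0 | hpos
    · rw [h0, hI0] at h; omega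
    · have := hImin (k - 1) hpos hk1m (I k) h
      have hYmono : Y (k - 1) ≤ Y k := by
        have : k - 1 ≤ k := by omega
        exact Finset.sum_le_sum_of_subset_of_nonneg
          (Finset.range_subset_range.mpr this) (fun i _ _ => hy i)
      linarith [hC]
  have hIco : ∑ j ∈ Finset.Ico (I (k - 1)) (I k), x j = S (I k) - S (I (k - 1)) :=
    Finset.sum_Ico_eq_sub x hmono
  have hYdiff : Y k - Y (k - 1) = y (k - 1) := by
    have hk : k = (k - 1) + 1 := by omega
    rw [hk]
    simp [hY, Finset.sum_range_succ]
  rw [hIco]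
  constructor <;> linarith
end

section
/- If for every machine i the load satisfies 0 ≤ L_i(S) ≤ (1+ε)·L_i(S*) + ε·W/m, where W = ∑_i L_i(S*), then the ℓ_p norm of L(S) is at most (1+2ε) times the ℓ_p norm of L(S*), for any p > 1. -/
theorem stmt_7 (m : ℕ) (hm : 1 ≤ m) (p : ℝ) (hp : 1 < p) (ε : ℝ) (hε : 0 < ε)
    (LS LSstar : Fin m → ℝ) (hLS : ∀ i, 0 ≤ LS i) (hLSstar : ∀ i, 0 ≤ LSstar i)
    (W : ℝ) (hW : W = ∑ i, LSstar i)
    (h : ∀ i, LS i ≤ (1 + ε) * LSstar i + ε * W / m) :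
    (∑ i, (LS i) ^ p) ^ (1 / p) ≤ (1 + 2 * ε) * (∑ i, (LSstar i) ^ p) ^ (1 / p) := by
  have hp0 : (0:ℝ) < p := lt_trans one_pos hp
  have hpne : p ≠ 0 := ne_of_gt hp0
  have hm0 : (0:ℝ) < (m:ℝ) := by exact_mod_cast hm
  have hW0 : 0 ≤ W := hW ▸ Finset.sum_nonneg (fun i _ => hLSstar i)
  set c : ℝ := ε * W / m with hc
  have hc0 : 0 ≤ c := div_nonneg (mul_nonneg hε.le hW0) hm0.le
  set A : ℝ := (∑ i, (LSstar i) ^ p) ^ (1 / p) with hA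
  have hA0 : 0 ≤ A :=
    Real.rpow_nonneg (Finset.sum_nonneg (fun i _ => Real.rpow_nonneg (hLSstar i) p)) _
  have h1ε : (0:ℝ) ≤ 1 + ε := by linarith
  have hq : p.HolderConjugate (p / (p - 1)) := (Real.holderConjugate_iff_eq_conjExponent hp).2 rfl
  -- Step 1: termwise monotonicity
  have step1 : (∑ i, (LS i) ^ p) ^ (1 / p) ≤
      (∑ i, ((1 + ε) * LSstar i + c) ^ p) ^ (1 / p) := by
    apply Real.rpow_le_rpow (Finset.sum_nonneg (fun i _ => Real.rpow_nonneg (hLS i) p))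
      (Finset.sum_le_sum (fun i _ => Real.rpow_le_rpow (hLS i) (h i) hp0.le))
      (by positivity)
  -- Step 2: Minkowski
  have step2 : (∑ i, ((1 + ε) * LSstar i + c) ^ p) ^ (1 / p) ≤
      (∑ i, ((1 + ε) * LSstar i) ^ p) ^ (1 / p) + (∑ _i : Fin m, c ^ p) ^ (1 / p) :=
    Real.Lp_add_le_of_nonneg Finset.univ hp.le
      (fun i _ => mul_nonneg h1ε (hLSstar i)) (fun i _ => hc0)
  -- Evaluate first term
  have e1 : (∑ i, ((1 + ε) * LSstar i) ^ p) ^ (1 / p) = (1 + ε) * A := by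
    have hterm : ∀ i : Fin m, ((1 + ε) * LSstar i) ^ p = (1 + ε) ^ p * (LSstar i) ^ p :=
      fun i => Real.mul_rpow h1ε (hLSstar i)
    rw [Finset.sum_congr rfl (fun i _ => hterm i), ← Finset.mul_sum,
      Real.mul_rpow (Real.rpow_nonneg h1ε p)
        (Finset.sum_nonneg (fun i _ => Real.rpow_nonneg (hLSstar i) p)),
      ← Real.rpow_mul h1ε, mul_one_div_cancel hpne, Real.rpow_one]
  -- Evaluate constant term
  have e2 : (∑ _i : Fin m, c ^ p) ^ (1 / p) = (m:ℝ) ^ (1 / p) * c := by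
    rw [Finset.sum_const, Finset.card_univ, Fintype.card_fin, nsmul_eq_mul,
      Real.mul_rpow hm0.le (Real.rpow_nonneg hc0 p),
      ← Real.rpow_mul hc0, mul_one_div_cancel hpne, Real.rpow_one]
  -- Hölder : W ≤ A * m^(1/q)
  have holder : W ≤ A * (m:ℝ) ^ (1 / (p / (p - 1))) := by
    have H := Real.inner_le_Lp_mul_Lq Finset.univ LSstar (fun _ => (1:ℝ)) hq
    simp only [mul_one] at H
    have e3 : (∑ i : Fin m, |LSstar i| ^ p) = ∑ i, (LSstar i) ^ p :=
      Finset.sum_congr rfl (fun i _ => by rw [abs_of_nonneg (hLSstar i)])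
    have e4 : (∑ _i : Fin m, |(1:ℝ)| ^ (p / (p - 1))) = (m:ℝ) := by
      simp
    rw [e3, e4] at H
    rw [hW]
    exact H
  -- constant term ≤ ε * A
  have key : (m:ℝ) ^ (1 / p) * c ≤ ε * A := by
    have hmul : (m:ℝ) ^ (1 / (p / (p - 1))) * (m:ℝ) ^ (1 / p) = (m:ℝ) := by
      rw [← Real.rpow_add hm0, one_div, one_div, add_comm, hq.inv_add_inv_eq_one, Real.rpow_one]
    have key2 : (m:ℝ) ^ (1 / p) * W ≤ A * (m:ℝ) := by
      calc (m:ℝ) ^ (1 / p) * W ≤ (m:ℝ) ^ (1 / p) * (A * (m:ℝ) ^ (1 / (p / (p - 1)))) :=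
            mul_le_mul_of_nonneg_left holder (by positivity)
        _ = A * ((m:ℝ) ^ (1 / (p / (p - 1))) * (m:ℝ) ^ (1 / p)) := by ring
        _ = A * (m:ℝ) := by rw [hmul]
    have : (m:ℝ) ^ (1 / p) * c = ε * ((m:ℝ) ^ (1 / p) * W) / m := by
      rw [hc]; ring
    rw [this]
    calc ε * ((m:ℝ) ^ (1 / p) * W) / m ≤ ε * (A * (m:ℝ)) / m := by
          gcongr
      _ = ε * A := by field_simp
  calc (∑ i, (LS i) ^ p) ^ (1 / p)
      ≤ (∑ i, ((1 + ε) * LSstar i + c) ^ p) ^ (1 / p) := step1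
    _ ≤ (∑ i, ((1 + ε) * LSstar i) ^ p) ^ (1 / p) + (∑ _i : Fin m, c ^ p) ^ (1 / p) := step2
    _ = (1 + ε) * A + (m:ℝ) ^ (1 / p) * c := by rw [e1, e2]
    _ ≤ (1 + ε) * A + ε * A := by linarith
    _ = (1 + 2 * ε) * A := by ring
end
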